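/- arXiv:1904.05687 — 2 statements merged into one kernel-verified Lean document; each statement's English description precedes it below -/
import Mathlib

section
/- Let X = ∂/∂x + (y/2)∂/∂z, Y = ∂/∂y − (x/2)∂/∂z on ℝ³ and a ∈ ℝ. Then the ten functions 1, x, y, z, x², xy, xz, y² + (a/3)x³, yz − (a/24)x⁴, z² + (a/120)x⁵ are linearly independent and each satisfies the system of equations X³u = aY²u, XYXu = 0, YXYu = 0, Y³u = 0. -/
/-- The vector field `X = ∂/∂x + (y/2)∂/∂z` acting on functions on ℝ³. -/
noncomputable def Xop (f : ℝ × ℝ × ℝ → ℝ) : ℝ × ℝ × ℝ → ℝ :=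
  fun p => fderiv ℝ f p (1, 0, 0) + p.2.1 / 2 * fderiv ℝ f p (0, 0, 1)

/-- The vector field `Y = ∂/∂y − (x/2)∂/∂z` acting on functions on ℝ³. -/
noncomputable def Yop (f : ℝ × ℝ × ℝ → ℝ) : ℝ × ℝ × ℝ → ℝ :=
  fun p => fderiv ℝ f p (0, 1, 0) - p.1 / 2 * fderiv ℝ f p (0, 0, 1)

/-- The ten listed functions. -/
noncomputable def F9 (a : ℝ) : Fin 10 → (ℝ × ℝ × ℝ → ℝ) :=
  ![fun _ => (1 : ℝ),
    fun p => p.1,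
    fun p => p.2.1,
    fun p => p.2.2,
    fun p => p.1 ^ 2,
    fun p => p.1 * p.2.1,
    fun p => p.1 * p.2.2,
    fun p => p.2.1 ^ 2 + a / 3 * p.1 ^ 3,
    fun p => p.2.1 * p.2.2 - a / 24 * p.1 ^ 4,
    fun p => p.2.2 ^ 2 + a / 120 * p.1 ^ 5]

lemma deriv_poly (c0 c1 c2 c3 c4 c5 : ℝ) :
    deriv (fun t : ℝ => c0 + (c1*t + (c2*t^2 + (c3*t^3 + (c4*t^4 + c5*t^5))))) 0 = c1 := by
  have h := ((((hasDerivAt_id (0:ℝ)).const_mul c1).add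
      (((hasDerivAt_pow 2 (0:ℝ)).const_mul c2).add
      (((hasDerivAt_pow 3 (0:ℝ)).const_mul c3).add
      (((hasDerivAt_pow 4 (0:ℝ)).const_mul c4).add
      ((hasDerivAt_pow 5 (0:ℝ)).const_mul c5))))).const_add c0)
  simpa using h.deriv

lemma fderiv_dir (f : ℝ×ℝ×ℝ → ℝ) (p v : ℝ×ℝ×ℝ) (hf : DifferentiableAt ℝ f p) :
    fderiv ℝ f p v = deriv (fun t : ℝ => f (p + t • v)) 0 := by
  have hline : HasDerivAt (fun t : ℝ => p + t • v) v 0 := by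
    simpa using ((hasDerivAt_id (0:ℝ)).smul_const v).const_add p
  have hf' : HasFDerivAt f (fderiv ℝ f p) (p + (0:ℝ) • v) := by simpa using hf.hasFDerivAt
  exact (hf'.comp_hasDerivAt 0 hline).deriv.symm

/-- A general polynomial shape closed under `Xop` and `Yop`. -/
noncomputable def G (k cx cy cz cxx cxy cxz cyy cyz czz w3 w4 w5 : ℝ) : ℝ×ℝ×ℝ → ℝ :=
  fun p => k + cx*p.1 + cy*p.2.1 + cz*p.2.2 + cxx*p.1^2 + cxy*p.1*p.2.1 + cxz*p.1*p.2.2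
    + cyy*p.2.1^2 + cyz*p.2.1*p.2.2 + czz*p.2.2^2 + w3*p.1^3 + w4*p.1^4 + w5*p.1^5

lemma G_diff (k cx cy cz cxx cxy cxz cyy cyz czz w3 w4 w5 : ℝ) (p : ℝ×ℝ×ℝ) :
    DifferentiableAt ℝ (G k cx cy cz cxx cxy cxz cyy cyz czz w3 w4 w5) p := by
  unfold G; fun_prop

lemma Xop_G (k cx cy cz cxx cxy cxz cyy cyz czz w3 w4 w5 : ℝ) :
    Xop (G k cx cy cz cxx cxy cxz cyy cyz czz w3 w4 w5) =
    G cx (2*cxx) (cxy + cz/2) cxz (3*w3) (cxz/2) 0 (cyz/2) czz 0 (4*w4) (5*w5) 0 := by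
  funext p
  show fderiv ℝ _ p (1,0,0) + p.2.1/2 * fderiv ℝ _ p (0,0,1) = _
  rw [fderiv_dir _ _ _ (G_diff _ _ _ _ _ _ _ _ _ _ _ _ _ p),
      fderiv_dir _ _ _ (G_diff _ _ _ _ _ _ _ _ _ _ _ _ _ p)]
  rw [show (fun t : ℝ => G k cx cy cz cxx cxy cxz cyy cyz czz w3 w4 w5 (p + t • ((1:ℝ),(0:ℝ),(0:ℝ)))) =
      (fun t : ℝ => (G k cx cy cz cxx cxy cxz cyy cyz czz w3 w4 w5 p) +
        ((cx + 2*cxx*p.1 + cxy*p.2.1 + cxz*p.2.2 + 3*w3*p.1^2 + 4*w4*p.1^3 + 5*w5*p.1^4)*t +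
        ((cxx + 3*w3*p.1 + 6*w4*p.1^2 + 10*w5*p.1^3)*t^2 +
        ((w3 + 4*w4*p.1 + 10*w5*p.1^2)*t^3 + ((w4 + 5*w5*p.1)*t^4 + w5*t^5))))) from
      funext fun t => by simp [G, Prod.ext_iff]; ring, deriv_poly]
  rw [show (fun t : ℝ => G k cx cy cz cxx cxy cxz cyy cyz czz w3 w4 w5 (p + t • ((0:ℝ),(0:ℝ),(1:ℝ)))) =
      (fun t : ℝ => (G k cx cy cz cxx cxy cxz cyy cyz czz w3 w4 w5 p) +
        ((cz + cxz*p.1 + cyz*p.2.1 + 2*czz*p.2.2)*t +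
        (czz*t^2 + ((0:ℝ)*t^3 + ((0:ℝ)*t^4 + (0:ℝ)*t^5))))) from
      funext fun t => by simp [G, Prod.ext_iff]; ring, deriv_poly]
  simp only [G]; ring

lemma Yop_G (k cx cy cz cxx cxy cxz cyy cyz czz w3 w4 w5 : ℝ) :
    Yop (G k cx cy cz cxx cxy cxz cyy cyz czz w3 w4 w5) =
    G cy (cxy - cz/2) (2*cyy) cyz (-(cxz/2)) (-(cyz/2)) (-czz) 0 0 0 0 0 0 := by
  funext p
  show fderiv ℝ _ p (0,1,0) - p.1/2 * fderiv ℝ _ p (0,0,1) = _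
  rw [fderiv_dir _ _ _ (G_diff _ _ _ _ _ _ _ _ _ _ _ _ _ p),
      fderiv_dir _ _ _ (G_diff _ _ _ _ _ _ _ _ _ _ _ _ _ p)]
  rw [show (fun t : ℝ => G k cx cy cz cxx cxy cxz cyy cyz czz w3 w4 w5 (p + t • ((0:ℝ),(1:ℝ),(0:ℝ)))) =
      (fun t : ℝ => (G k cx cy cz cxx cxy cxz cyy cyz czz w3 w4 w5 p) +
        ((cy + cxy*p.1 + 2*cyy*p.2.1 + cyz*p.2.2)*t +
        (cyy*t^2 + ((0:ℝ)*t^3 + ((0:ℝ)*t^4 + (0:ℝ)*t^5))))) from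
      funext fun t => by simp [G, Prod.ext_iff]; ring, deriv_poly]
  rw [show (fun t : ℝ => G k cx cy cz cxx cxy cxz cyy cyz czz w3 w4 w5 (p + t • ((0:ℝ),(0:ℝ),(1:ℝ)))) =
      (fun t : ℝ => (G k cx cy cz cxx cxy cxz cyy cyz czz w3 w4 w5 p) +
        ((cz + cxz*p.1 + cyz*p.2.1 + 2*czz*p.2.2)*t +
        (czz*t^2 + ((0:ℝ)*t^3 + ((0:ℝ)*t^4 + (0:ℝ)*t^5))))) from
      funext fun t => by simp [G, Prod.ext_iff]; ring, deriv_poly]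
  simp only [G]; ring

lemma sys_G (a : ℝ) (u : ℝ×ℝ×ℝ → ℝ) (k cx cy cz cxx cxy cxz cyy cyz czz w3 w4 w5 : ℝ)
    (hu : u = G k cx cy cz cxx cxy cxz cyy cyz czz w3 w4 w5)
    (h1 : 6*w3 = 2*a*cyy) (h2 : 24*w4 = -(a*cyz)) (h3 : 120*w5 = a*czz)
    (p : ℝ×ℝ×ℝ) :
    Xop (Xop (Xop u)) p = a * Yop (Yop u) p ∧
    Xop (Yop (Xop u)) p = 0 ∧
    Yop (Xop (Yop u)) p = 0 ∧
    Yop (Yop (Yop u)) p = 0 := by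
  subst hu
  refine ⟨?_, ?_, ?_, ?_⟩
  · rw [Xop_G, Xop_G, Xop_G, Yop_G, Yop_G]
    simp only [G]; linear_combination h1 + p.1 * h2 + p.1^2/2 * h3
  · rw [Xop_G, Yop_G, Xop_G]; simp only [G]; ring
  · rw [Yop_G, Xop_G, Yop_G]; simp only [G]; ring
  · rw [Yop_G, Yop_G, Yop_G]; simp only [G]; ring

/-- The ten functions are linearly independent and each satisfies the system
`X³u = aY²u`, `XYXu = 0`, `YXYu = 0`, `Y³u = 0`. -/
theorem stmt9 (a : ℝ) :
    LinearIndependent ℝ (F9 a) ∧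
    ∀ i : Fin 10, ∀ p : ℝ × ℝ × ℝ,
      Xop (Xop (Xop (F9 a i))) p = a * Yop (Yop (F9 a i)) p ∧
      Xop (Yop (Xop (F9 a i))) p = 0 ∧
      Yop (Xop (Yop (F9 a i))) p = 0 ∧
      Yop (Yop (Yop (F9 a i))) p = 0 := by
  constructor
  · rw [Fintype.linearIndependent_iff]
    intro g hg
    have h : ∀ q : ℝ×ℝ×ℝ,
        g 0 * 1 + g 1 * q.1 + g 2 * q.2.1 + g 3 * q.2.2 + g 4 * q.1^2 + g 5 * (q.1*q.2.1)
        + g 6 * (q.1*q.2.2) + g 7 * (q.2.1^2 + a/3*q.1^3) + g 8 * (q.2.1*q.2.2 - a/24*q.1^4)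
        + g 9 * (q.2.2^2 + a/120*q.1^5) = 0 := by
      intro q
      have h0 := congrFun hg q
      simp only [Finset.sum_apply, Pi.smul_apply, smul_eq_mul, Pi.zero_apply,
        Fin.sum_univ_succ, Fin.sum_univ_zero, F9, Matrix.cons_val_zero,
        Matrix.cons_val_succ,
        show ((0:Fin 9).succ = (1:Fin 10)) from rfl,
        show ((0:Fin 8).succ.succ = (2:Fin 10)) from rfl,
        show ((0:Fin 7).succ.succ.succ = (3:Fin 10)) from rfl,
        show ((0:Fin 6).succ.succ.succ.succ = (4:Fin 10)) from rfl,
        show ((0:Fin 5).succ.succ.succ.succ.succ = (5:Fin 10)) from rfl,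
        show ((0:Fin 4).succ.succ.succ.succ.succ.succ = (6:Fin 10)) from rfl,
        show ((0:Fin 3).succ.succ.succ.succ.succ.succ.succ = (7:Fin 10)) from rfl,
        show ((0:Fin 2).succ.succ.succ.succ.succ.succ.succ.succ = (8:Fin 10)) from rfl,
        show ((0:Fin 1).succ.succ.succ.succ.succ.succ.succ.succ.succ = (9:Fin 10)) from rfl] at h0
      linarith [h0]
    have h000 := h (0,0,0)
    have hg0 : g 0 = 0 := by norm_num at h000; linarith
    have h010 := h (0,1,0); have h0m10 := h (0,-1,0)
    norm_num [hg0] at h010 h0m10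
    have hg2 : g 2 = 0 := by linarith
    have hg7 : g 7 = 0 := by linarith
    have h001 := h (0,0,1); have h00m1 := h (0,0,-1)
    norm_num [hg0] at h001 h00m1
    have hg3 : g 3 = 0 := by linarith
    have hg9 : g 9 = 0 := by linarith
    have h011 := h (0,1,1)
    norm_num [hg0, hg2, hg3, hg7, hg9] at h011
    have hg8 : g 8 = 0 := h011
    have h100 := h (1,0,0); have hm100 := h (-1,0,0)
    norm_num [hg0, hg7, hg8, hg9] at h100 hm100
    have hg1 : g 1 = 0 := by linarith
    have hg4 : g 4 = 0 := by linarith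
    have h110 := h (1,1,0)
    norm_num [hg0, hg1, hg2, hg4, hg7, hg8, hg9] at h110
    have hg5 : g 5 = 0 := h110
    have h101 := h (1,0,1)
    norm_num [hg0, hg1, hg3, hg4, hg7, hg8, hg9] at h101
    have hg6 : g 6 = 0 := h101
    intro i
    fin_cases i <;> assumption
  · intro i p
    fin_cases i
    · exact sys_G a _ 1 0 0 0 0 0 0 0 0 0 0 0 0
        (funext fun q => by show (1:ℝ) = _; simp only [G]; ring) (by ring) (by ring) (by ring) p
    · exact sys_G a _ 0 1 0 0 0 0 0 0 0 0 0 0 0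
        (funext fun q => by show q.1 = _; simp only [G]; ring) (by ring) (by ring) (by ring) p
    · exact sys_G a _ 0 0 1 0 0 0 0 0 0 0 0 0 0
        (funext fun q => by show q.2.1 = _; simp only [G]; ring) (by ring) (by ring) (by ring) p
    · exact sys_G a _ 0 0 0 1 0 0 0 0 0 0 0 0 0
        (funext fun q => by show q.2.2 = _; simp only [G]; ring) (by ring) (by ring) (by ring) p
    · exact sys_G a _ 0 0 0 0 1 0 0 0 0 0 0 0 0
        (funext fun q => by show q.1^2 = _; simp only [G]; ring) (by ring) (by ring) (by ring) p
    · exact sys_G a _ 0 0 0 0 0 1 0 0 0 0 0 0 0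
        (funext fun q => by show q.1*q.2.1 = _; simp only [G]; ring) (by ring) (by ring) (by ring) p
    · exact sys_G a _ 0 0 0 0 0 0 1 0 0 0 0 0 0
        (funext fun q => by show q.1*q.2.2 = _; simp only [G]; ring) (by ring) (by ring) (by ring) p
    · exact sys_G a _ 0 0 0 0 0 0 0 1 0 0 (a/3) 0 0
        (funext fun q => by show q.2.1^2 + a/3*q.1^3 = _; simp only [G]; ring)
        (by ring) (by ring) (by ring) p
    · exact sys_G a _ 0 0 0 0 0 0 0 0 1 0 0 (-(a/24)) 0
        (funext fun q => by show q.2.1*q.2.2 - a/24*q.1^4 = _; simp only [G]; ring)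
        (by ring) (by ring) (by ring) p
    · exact sys_G a _ 0 0 0 0 0 0 0 0 0 1 0 0 (a/120)
        (funext fun q => by show q.2.2^2 + a/120*q.1^5 = _; simp only [G]; ring)
        (by ring) (by ring) (by ring) p
end

section
/- Let g_- = ⊕_{p<0} g_p be a finite-dimensional graded nilpotent Lie algebra and V = ⊕_j V_j a finite-dimensional graded g_-–module (g_p · V_j ⊆ V_{p+j}). For an integer λ, the following are equivalent: (i) for every i > λ, {v ∈ V_i : ξ·v = 0 for all ξ ∈ g_-} = 0; (ii) the dual module V* (with (ξ·α)(v) = −α(ξ·v) and grading (V*)_j = (V_{−j})*) is generated as a g_-–module by ⊕_{j ≥ −λ} (V*)_j, i.e. the smallest subspace of V* containing ⊕_{j ≥ −λ}(V*)_j and closed under the action of g_- is all of V*. -/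
/-- Auxiliary: the `(p+i)`-component of `⁅ξ, v⁆` for homogeneous `ξ` of degree `p`
is the bracket of `ξ` with the `i`-component of `v`. -/
lemma stmt18_aux {K : Type*} [Field K]
    {g : Type*} [LieRing g] [LieAlgebra K g]
    {V : Type*} [AddCommGroup V] [Module K V] [LieRingModule g V] [LieModule K g V]
    (gdeg : ℤ → Submodule K g)
    (Vdeg : ℤ → Submodule K V) [DirectSum.Decomposition Vdeg]
    (hact : ∀ p j : ℤ, ∀ ξ ∈ gdeg p, ∀ v ∈ Vdeg j, ⁅ξ, v⁆ ∈ Vdeg (p + j))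
    {p : ℤ} {ξ : g} (hξ : ξ ∈ gdeg p) (v : V) (i : ℤ) :
    (DirectSum.decompose Vdeg ⁅ξ, v⁆ (p + i) : V)
      = ⁅ξ, (DirectSum.decompose Vdeg v i : V)⁆ := by
  classical
  have h1 : ⁅ξ, v⁆ = ∑ k ∈ (DirectSum.decompose Vdeg v).support,
      ⁅ξ, (DirectSum.decompose Vdeg v k : V)⁆ := by
    conv_lhs => rw [← DirectSum.sum_support_decompose Vdeg v]
    simp only [← LieModule.toEnd_apply_apply K g V]
    exact map_sum _ _ _
  have h0 : ∀ k ∈ (DirectSum.decompose Vdeg v).support, k ≠ i →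
      (DirectSum.decompose Vdeg ⁅ξ, (DirectSum.decompose Vdeg v k : V)⁆ (p + i) : V) = 0 := by
    intro k _ hk
    exact DirectSum.decompose_of_mem_ne Vdeg
      (hact p k ξ hξ _ (SetLike.coe_mem _)) (show p + k ≠ p + i by omega)
  have h2 : i ∉ (DirectSum.decompose Vdeg v).support →
      (DirectSum.decompose Vdeg ⁅ξ, (DirectSum.decompose Vdeg v i : V)⁆ (p + i) : V) = 0 := by
    intro hi
    rw [DFinsupp.notMem_support_iff] at hi
    rw [hi]
    simp
  rw [h1, DirectSum.decompose_sum, DFinsupp.finset_sum_apply,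
    AddSubmonoidClass.coe_finset_sum, Finset.sum_eq_single i h0 h2]
  exact DirectSum.decompose_of_mem_same Vdeg (hact p i ξ hξ _ (SetLike.coe_mem _))

/-- For a finite-dimensional graded nilpotent Lie algebra `g₋` (graded in
negative degrees) and a finite-dimensional graded `g₋`-module `V`, the
vanishing of the `g₋`-invariants of `V` in all degrees `i > λ` is equivalent to
the dual module `V*` (with `(ξ·α)(v) = −α(ξ·v)` and `(V*)_j = (V_{−j})*`) being
generated by `⊕_{j ≥ −λ} (V*)_j`. -/
theorem stmt18 {K : Type*} [Field K]
    {g : Type*} [LieRing g] [LieAlgebra K g] [FiniteDimensional K g]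
    {V : Type*} [AddCommGroup V] [Module K V] [LieRingModule g V] [LieModule K g V]
    [FiniteDimensional K V]
    (gdeg : ℤ → Submodule K g) (hg : DirectSum.IsInternal gdeg)
    (hgneg : ∀ p : ℤ, 0 ≤ p → gdeg p = ⊥)
    (hgbr : ∀ p q : ℤ, ∀ x ∈ gdeg p, ∀ y ∈ gdeg q, ⁅x, y⁆ ∈ gdeg (p + q))
    (Vdeg : ℤ → Submodule K V) (hV : DirectSum.IsInternal Vdeg)
    (hact : ∀ p j : ℤ, ∀ ξ ∈ gdeg p, ∀ v ∈ Vdeg j, ⁅ξ, v⁆ ∈ Vdeg (p + j))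
    (lam : ℤ)
    (Ddeg : ℤ → Submodule K (Module.Dual K V))
    (hD : ∀ j : ℤ, Ddeg j = (⨆ i ∈ {i : ℤ | i ≠ -j}, Vdeg i).dualAnnihilator)
    (Dact : g → Module.Dual K V → Module.Dual K V)
    (hDact : ∀ (ξ : g) (α : Module.Dual K V) (v : V), Dact ξ α v = -α ⁅ξ, v⁆) :
    (∀ i : ℤ, lam < i → ∀ v ∈ Vdeg i, (∀ ξ : g, ⁅ξ, v⁆ = 0) → v = 0) ↔
    (∀ W : Submodule K (Module.Dual K V),
      (∀ j : ℤ, -lam ≤ j → Ddeg j ≤ W) →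
      (∀ (ξ : g), ∀ α ∈ W, Dact ξ α ∈ W) → W = ⊤) := by
  classical
  letI : DirectSum.Decomposition Vdeg := hV.chooseDecomposition
  constructor
  · -- (i) → (ii)
    intro hI W hW1 hW2
    set U : Submodule K V := W.dualCoannihilator with hUdef
    -- components of elements of U vanish in degrees ≤ lam
    have claim1 : ∀ v ∈ U, ∀ i : ℤ, i ≤ lam → (DirectSum.decompose Vdeg v i : V) = 0 := by
      intro v hv i hi
      by_contra hw
      have hwmem : (DirectSum.decompose Vdeg v i : V) ∈ Vdeg i := SetLike.coe_mem _
      have hwM : (DirectSum.decompose Vdeg v i : V) ∉ ⨆ k ∈ {k : ℤ | k ≠ i}, Vdeg k := by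
        intro hmem
        exact hw ((Submodule.mem_bot K).mp
          ((hV.submodule_iSupIndep i).le_bot (Submodule.mem_inf.mpr ⟨hwmem, hmem⟩)))
      set M : Submodule K V := ⨆ k ∈ {k : ℤ | k ≠ i}, Vdeg k with hMdef
      have hq : M.mkQ (DirectSum.decompose Vdeg v i : V) ≠ 0 := by
        intro h
        exact hwM ((Submodule.Quotient.mk_eq_zero M).mp h)
      obtain ⟨φ, hφ⟩ : ∃ φ : Module.Dual K (V ⧸ M),
          φ (M.mkQ (DirectSum.decompose Vdeg v i : V)) ≠ 0 := by
        by_contra h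
        push_neg at h
        exact hq ((Module.forall_dual_apply_eq_zero_iff K _).mp h)
      set α : Module.Dual K V := φ.comp M.mkQ with hαdef
      have hαann : α ∈ M.dualAnnihilator := by
        rw [Submodule.mem_dualAnnihilator]
        intro m hm
        have hm0 : M.mkQ m = 0 := (Submodule.Quotient.mk_eq_zero M).mpr hm
        simp [hαdef, hm0]
      have hαW : α ∈ W := by
        apply hW1 (-i) (by omega)
        rw [hD]
        simp only [neg_neg]
        exact hαann
      have hv0 : α v = 0 := (Submodule.mem_dualCoannihilator v).mp hv α hαW
      have h0 : ∀ k ∈ (DirectSum.decompose Vdeg v).support, k ≠ i →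
          α (DirectSum.decompose Vdeg v k : V) = 0 := by
        intro k _ hk
        have hmem : (DirectSum.decompose Vdeg v k : V) ∈ M :=
          Submodule.mem_iSup_of_mem k (Submodule.mem_iSup_of_mem hk (SetLike.coe_mem _))
        exact (Submodule.mem_dualAnnihilator α).mp hαann _ hmem
      have h2 : i ∉ (DirectSum.decompose Vdeg v).support →
          α (DirectSum.decompose Vdeg v i : V) = 0 := by
        intro hi'
        rw [DFinsupp.notMem_support_iff] at hi'
        rw [hi']
        simp
      have hαv : α v = α (DirectSum.decompose Vdeg v i : V) := by
        conv_lhs => rw [← DirectSum.sum_support_decompose Vdeg v]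
        rw [map_sum, Finset.sum_eq_single i h0 h2]
      exact hφ (show α (DirectSum.decompose Vdeg v i : V) = 0 from hαv ▸ hv0)
    -- U is a g-submodule
    have claim2 : ∀ v ∈ U, ∀ ξ : g, ⁅ξ, v⁆ ∈ U := by
      intro v hv ξ
      rw [hUdef, Submodule.mem_dualCoannihilator]
      intro α hα
      have h1 : Dact ξ α ∈ W := hW2 ξ α hα
      have h2 : (Dact ξ α) v = 0 := (Submodule.mem_dualCoannihilator v).mp hv _ h1
      rw [hDact] at h2
      exact neg_eq_zero.mp h2
    have hUbot : U = ⊥ := by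
      rw [eq_bot_iff]
      intro u hu
      rw [Submodule.mem_bot]
      by_contra hu0
      have hex : ∃ d : ℤ, (DirectSum.decompose Vdeg u d : V) ≠ 0 := by
        by_contra h
        push_neg at h
        apply hu0
        rw [← DirectSum.sum_support_decompose Vdeg u]
        exact Finset.sum_eq_zero fun k _ => h k
      have hbdd : ∀ z : ℤ, (∃ u' ∈ U, (DirectSum.decompose Vdeg u' z : V) ≠ 0) →
          lam + 1 ≤ z := by
        rintro z ⟨u', hu', hz⟩
        by_contra h
        exact hz (claim1 u' hu' z (by omega))
      obtain ⟨d0, hd0⟩ := hex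
      obtain ⟨d, ⟨u', hu', hd⟩, hmin⟩ := Int.exists_least_of_bdd
        (P := fun z => ∃ u' ∈ U, (DirectSum.decompose Vdeg u' z : V) ≠ 0)
        ⟨lam + 1, hbdd⟩ ⟨d0, u, hu, hd0⟩
      have hdlam : lam < d := by have := hbdd d ⟨u', hu', hd⟩; omega
      have hwmem : (DirectSum.decompose Vdeg u' d : V) ∈ Vdeg d := SetLike.coe_mem _
      have hhom : ∀ (p : ℤ) (ξ : g), ξ ∈ gdeg p →
          ⁅ξ, (DirectSum.decompose Vdeg u' d : V)⁆ = 0 := by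
        intro p ξ hξ
        rcases le_or_gt 0 p with h0 | h0
        · have hbot := hgneg p h0
          rw [hbot, Submodule.mem_bot] at hξ
          rw [hξ, zero_lie]
        · have hb : ⁅ξ, u'⁆ ∈ U := claim2 u' hu' ξ
          rw [← stmt18_aux gdeg Vdeg hact hξ u' d]
          by_contra hne
          have := hmin (p + d) ⟨⁅ξ, u'⁆, hb, hne⟩
          omega
      have hinv : ∀ ξ : g, ⁅ξ, (DirectSum.decompose Vdeg u' d : V)⁆ = 0 := by
        intro ξ
        have hmem : ξ ∈ ⨆ p, gdeg p := by rw [hg.submodule_iSup_eq_top]; trivial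
        rw [Submodule.mem_iSup_iff_exists_finsupp] at hmem
        obtain ⟨f, hf, hsum⟩ := hmem
        have hsplit : ⁅ξ, (DirectSum.decompose Vdeg u' d : V)⁆
            = ∑ p ∈ f.support, ⁅f p, (DirectSum.decompose Vdeg u' d : V)⁆ := by
          rw [← hsum, Finsupp.sum]
          simp only [← LieModule.toEnd_apply_apply K g V]
          rw [map_sum, LinearMap.sum_apply]
        rw [hsplit]
        exact Finset.sum_eq_zero fun p _ => hhom p (f p) (hf p)
      exact hd (hI d hdlam _ hwmem hinv)
    rw [← Subspace.dualCoannihilator_dualAnnihilator_eq (W := W), ← hUdef, hUbot,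
      Submodule.dualAnnihilator_bot]
  · -- (ii) → (i)
    intro hgen i hi v hv hinv
    set W : Submodule K (Module.Dual K V) := (K ∙ v).dualAnnihilator with hWdef
    have h1 : ∀ j : ℤ, -lam ≤ j → Ddeg j ≤ W := by
      intro j hj α hα
      rw [hD] at hα
      rw [hWdef, Submodule.mem_dualAnnihilator]
      intro x hx
      obtain ⟨c, rfl⟩ := Submodule.mem_span_singleton.mp hx
      have hvmem : v ∈ ⨆ k ∈ {k : ℤ | k ≠ -j}, Vdeg k :=
        Submodule.mem_iSup_of_mem i
          (Submodule.mem_iSup_of_mem (show i ≠ -j by omega) hv)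
      have hαv : α v = 0 := (Submodule.mem_dualAnnihilator α).mp hα v hvmem
      rw [map_smul, hαv, smul_zero]
    have h2 : ∀ ξ : g, ∀ α ∈ W, Dact ξ α ∈ W := by
      intro ξ α hα
      rw [hWdef, Submodule.mem_dualAnnihilator]
      intro x hx
      obtain ⟨c, rfl⟩ := Submodule.mem_span_singleton.mp hx
      rw [map_smul, hDact, hinv ξ, map_zero, neg_zero, smul_zero]
    have hW := hgen W h1 h2
    have hall : ∀ φ : Module.Dual K V, φ v = 0 := by
      intro φ
      have hφ : φ ∈ W := by rw [hW]; exact Submodule.mem_top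
      rw [hWdef] at hφ
      exact (Submodule.mem_dualAnnihilator φ).mp hφ v (Submodule.mem_span_singleton_self v)
    exact (Module.forall_dual_apply_eq_zero_iff K v).mp hall
end
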